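/- Let α > 0, γ > 0, ρ ≥ 0 be real numbers with ρ > α − γ/2, and let d be a real number. Then every real sequence (λ_k) satisfying λ_{k+2} = ((ρ−α)/(γ+ρ))·λ_{k+1} + (α/(γ+ρ))·λ_k + (2αγ/(γ+ρ))·d for all k ∈ ℕ converges to the equilibrium price 2αd as k → ∞. -/

import Mathlib

/-- Under the price-and-consumption-memory model with constant demand, if
ρ > α − γ/2 then every solution of the price recurrence converges to the
equilibrium price 2αd. -/
theorem stmt_17 (α γ ρ d : ℝ) (hα : 0 < α) (hγ : 0 < γ) (hρ : 0 ≤ ρ)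
    (hstab : α - γ / 2 < ρ)
    (lam : ℕ → ℝ)
    (hrec : ∀ k : ℕ, lam (k + 2) = ((ρ - α) / (γ + ρ)) * lam (k + 1)
        + (α / (γ + ρ)) * lam k + (2 * α * γ / (γ + ρ)) * d) :
    Filter.Tendsto lam Filter.atTop (nhds (2 * α * d)) := by
  have hgp : 0 < γ + ρ := by linarith
  set a : ℝ := (ρ - α) / (γ + ρ) with ha
  set b : ℝ := α / (γ + ρ) with hb
  set e : ℕ → ℝ := fun k => lam k - 2 * α * d with he
  have hbpos : 0 < b := div_pos hα hgp
  have herec : ∀ k, e (k + 2) = a * e (k + 1) + b * e k := by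
    intro k
    simp only [he, ha, hb, hrec k]
    field_simp
    ring
  set q : ℝ := |a| + b with hq
  have hq0 : 0 ≤ q := by positivity
  have hq1 : q < 1 := by
    have habs : |a| = |ρ - α| / (γ + ρ) := by
      rw [ha, abs_div, abs_of_pos hgp]
    rw [hq, habs, hb, ← add_div, div_lt_one hgp]
    rcases abs_cases (ρ - α) with ⟨h1, _⟩ | ⟨h1, _⟩ <;> rw [h1] <;> linarith
  set M : ℝ := max |e 0| |e 1| with hM
  have hM0 : 0 ≤ M := le_trans (abs_nonneg _) (le_max_left _ _)
  have key : ∀ n, |e (2 * n)| ≤ q ^ n * M ∧ |e (2 * n + 1)| ≤ q ^ n * M := by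
    intro n
    induction n with
    | zero => simp [hM, le_max_left, le_max_right]
    | succ n ih =>
      obtain ⟨h1, h2⟩ := ih
      have e1 : |e (2 * n + 2)| ≤ q ^ (n + 1) * M := by
        have := herec (2 * n)
        calc |e (2 * n + 2)| = |a * e (2 * n + 1) + b * e (2 * n)| := by rw [this]
          _ ≤ |a| * |e (2 * n + 1)| + b * |e (2 * n)| := by
              refine (abs_add_le _ _).trans ?_
              rw [abs_mul, abs_mul, abs_of_pos hbpos]
          _ ≤ |a| * (q ^ n * M) + b * (q ^ n * M) := by
              gcongr <;> positivity
          _ = q ^ (n + 1) * M := by rw [hq]; ring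
      have e2 : |e (2 * n + 3)| ≤ q ^ (n + 1) * M := by
        have := herec (2 * n + 1)
        calc |e (2 * n + 3)| = |a * e (2 * n + 2) + b * e (2 * n + 1)| := by rw [this]
          _ ≤ |a| * |e (2 * n + 2)| + b * |e (2 * n + 1)| := by
              refine (abs_add_le _ _).trans ?_
              rw [abs_mul, abs_mul, abs_of_pos hbpos]
          _ ≤ |a| * (q ^ (n + 1) * M) + b * (q ^ n * M) := by
              gcongr <;> positivity
          _ = (|a| * q + b) * (q ^ n * M) := by ring
          _ ≤ q * (q ^ n * M) := by
              have : |a| * q + b ≤ q := by nlinarith [abs_nonneg a]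
              have hnn : 0 ≤ q ^ n * M := by positivity
              exact mul_le_mul_of_nonneg_right this hnn
          _ = q ^ (n + 1) * M := by ring
      constructor
      · have : 2 * (n + 1) = 2 * n + 2 := by ring
        rw [this]; exact e1
      · have : 2 * (n + 1) + 1 = 2 * n + 3 := by ring
        rw [this]; exact e2
  have hbound : ∀ k, |e k| ≤ q ^ (k / 2) * M := by
    intro k
    rcases Nat.even_or_odd k with ⟨m, hm⟩ | ⟨m, hm⟩
    · have hk : k = 2 * m := by omega
      have hd : k / 2 = m := by omega
      rw [hd, hk]
      exact (key m).1
    · have hk : k = 2 * m + 1 := by omega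
      have hd : k / 2 = m := by omega
      rw [hd, hk]
      exact (key m).2
  -- q^(k/2) * M → 0
  have hdiv : Filter.Tendsto (fun k : ℕ => k / 2) Filter.atTop Filter.atTop := by
    apply Filter.tendsto_atTop.2
    intro n
    filter_upwards [Filter.eventually_ge_atTop (2 * n)] with k hk
    omega
  have hpow : Filter.Tendsto (fun k : ℕ => q ^ (k / 2) * M) Filter.atTop (nhds 0) := by
    have h0 : Filter.Tendsto (fun n : ℕ => q ^ n) Filter.atTop (nhds 0) :=
      tendsto_pow_atTop_nhds_zero_of_lt_one hq0 hq1
    have := (h0.comp hdiv).mul_const M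
    simpa using this
  have hetend : Filter.Tendsto e Filter.atTop (nhds 0) := by
    apply squeeze_zero_norm _ hpow
    intro k
    simpa using hbound k
  have : Filter.Tendsto (fun k => e k + 2 * α * d) Filter.atTop (nhds (0 + 2 * α * d)) :=
    hetend.add_const _
  simpa [he] using this
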